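/- Non-normalizability of the generalized eigenfunctions: let ω ∈ ℝ and let φ : ℕ → ℂ solve the eigenvalue recurrence for ω and have plane-wave asymptotics with amplitude A ≠ 0. Then the sequence n ↦ |φ n|² is not summable, i.e. Σ_{n=0}^∞ |φ n|² = ∞, so φ does not define an element of ℓ²(ℕ, ℂ). -/

import Mathlib

/-- ξ(y) = √(y² + 1/16). -/
noncomputable def xi (y : ℝ) : ℝ := Real.sqrt (y ^ 2 + 1 / 16)

/-- χ(x) = log(2·√(4x² + 4x + 1) + √(16x² + 16x + 5)). -/
noncomputable def chi (x : ℝ) : ℝ :=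
  Real.log (2 * Real.sqrt (4 * x ^ 2 + 4 * x + 1) + Real.sqrt (16 * x ^ 2 + 16 * x + 5))

/-- f_s(x) = ξ(x+1/2)^(−1/2)·(A·exp(i·ω·χ(x)) − s·(conj A)·exp(−i·ω·χ(x))). -/
noncomputable def fpw (A : ℂ) (ω s x : ℝ) : ℂ :=
  ((xi (x + 1/2) ^ (-(1/2) : ℝ) : ℝ) : ℂ) *
    (A * Complex.exp (Complex.I * ω * chi x) -
      (s : ℂ) * (starRingEnd ℂ) A * Complex.exp (-(Complex.I * ω * chi x)))

/-- φ : ℕ → ℂ solves the eigenvalue recurrence for ω (φ n is the coefficient at spin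
j = n/2): φ 0 = 0 and ω·φ n = i·(n/2 + 3/4)·φ(n+1) − i·(n/2 + 1/4)·φ(n−1) for n ≥ 1. -/
def SolvesRec (ω : ℝ) (φ : ℕ → ℂ) : Prop :=
  φ 0 = 0 ∧ ∀ n : ℕ, 1 ≤ n →
    (ω : ℂ) * φ n =
      Complex.I * ((n : ℂ) / 2 + 3 / 4) * φ (n + 1) -
        Complex.I * ((n : ℂ) / 2 + 1 / 4) * φ (n - 1)

/-- φ has plane-wave asymptotics with amplitude A: there exist C > 0, Δ > 1 and N₀
such that |φ n − f_{(−1)^n}(n/2)| ≤ C·(n/2)^(−Δ) for all n ≥ N₀. -/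
def PlaneWaveAsymp (A : ℂ) (ω : ℝ) (φ : ℕ → ℂ) : Prop :=
  ∃ C : ℝ, 0 < C ∧ ∃ Δ : ℝ, 1 < Δ ∧ ∃ N₀ : ℕ, ∀ n : ℕ, N₀ ≤ n →
    ‖φ n - fpw A ω ((-1 : ℝ) ^ n) ((n : ℝ) / 2)‖ ≤ C * ((n : ℝ) / 2) ^ (-Δ)

lemma xi_pos (y : ℝ) : 0 < xi y := Real.sqrt_pos.mpr (by positivity)

lemma xi_le (y : ℝ) (hy : 0 ≤ y) : xi y ≤ y + 1 := by
  have h : y ^ 2 + 1 / 16 ≤ (y + 1) ^ 2 := by nlinarith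
  calc xi y ≤ Real.sqrt ((y + 1) ^ 2) := Real.sqrt_le_sqrt h
    _ = y + 1 := Real.sqrt_sq (by linarith)

lemma chi_eq (x : ℝ) (hx : 0 ≤ x) :
    chi x = Real.log ((4 * x + 2) + Real.sqrt ((4 * x + 2) ^ 2 + 1)) := by
  unfold chi
  have h1 : 4 * x ^ 2 + 4 * x + 1 = (2 * x + 1) ^ 2 := by ring
  have h2 : 16 * x ^ 2 + 16 * x + 5 = (4 * x + 2) ^ 2 + 1 := by ring
  rw [h1, h2, Real.sqrt_sq (by linarith)]
  ring_nf

lemma chi_mono_diff (x : ℝ) (hx : 1 ≤ x) :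
    0 ≤ chi (x + 1/2) - chi x ∧ chi (x + 1/2) - chi x ≤ 1 / x := by
  have hx0 : (0:ℝ) < x := by linarith
  set u : ℝ := 4 * x + 2 with hu
  have hu0 : (0:ℝ) ≤ u := by simp [hu]; linarith
  set P : ℝ := u + Real.sqrt (u ^ 2 + 1) with hP
  set P' : ℝ := (u + 2) + Real.sqrt ((u + 2) ^ 2 + 1) with hP'
  have hc1 : chi x = Real.log P := chi_eq x (by linarith)
  have hc2 : chi (x + 1/2) = Real.log P' := by
    have := chi_eq (x + 1/2) (by linarith)
    rw [this]
    have e : 4 * (x + 1/2) + 2 = u + 2 := by rw [hu]; ring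
    rw [e]
  have hPu : u ≤ P := by
    rw [hP]; linarith [Real.sqrt_nonneg (u ^ 2 + 1)]
  have hupos : (0:ℝ) < u := by rw [hu]; linarith
  have hPpos : 0 < P := lt_of_lt_of_le hupos hPu
  have hPle : P ≤ P' := by
    have : Real.sqrt (u ^ 2 + 1) ≤ Real.sqrt ((u + 2) ^ 2 + 1) :=
      Real.sqrt_le_sqrt (by nlinarith)
    rw [hP, hP']; linarith
  have hsqle : Real.sqrt ((u + 2) ^ 2 + 1) ≤ Real.sqrt (u ^ 2 + 1) + 2 := by
    have husqrt : u ≤ Real.sqrt (u ^ 2 + 1) := by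
      have h1 : Real.sqrt (u ^ 2) ≤ Real.sqrt (u ^ 2 + 1) := Real.sqrt_le_sqrt (by linarith)
      rwa [Real.sqrt_sq hu0] at h1
    have h2 : (u + 2) ^ 2 + 1 ≤ (Real.sqrt (u ^ 2 + 1) + 2) ^ 2 := by
      nlinarith [Real.sq_sqrt (show (0:ℝ) ≤ u ^ 2 + 1 by positivity)]
    calc Real.sqrt ((u + 2) ^ 2 + 1) ≤ Real.sqrt ((Real.sqrt (u ^ 2 + 1) + 2) ^ 2) :=
          Real.sqrt_le_sqrt h2
      _ = Real.sqrt (u ^ 2 + 1) + 2 := Real.sqrt_sq (by positivity)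
  have hP4 : P' ≤ P + 4 := by rw [hP, hP']; linarith
  constructor
  · rw [hc1, hc2]
    have := Real.log_le_log hPpos hPle
    linarith
  · rw [hc1, hc2]
    have hquot : Real.log P' - Real.log P = Real.log (P' / P) := by
      rw [Real.log_div (by linarith) (ne_of_gt hPpos)]
    rw [hquot]
    have h1 : Real.log (P' / P) ≤ P' / P - 1 :=
      Real.log_le_sub_one_of_pos (by positivity)
    have h2 : P' / P - 1 ≤ 1 / x := by
      rw [div_sub_one (ne_of_gt hPpos), div_le_div_iff₀ hPpos hx0]
      have h4 : 4 * x ≤ P := by rw [hu] at hPu; linarith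
      nlinarith
    linarith


lemma conj_exp_aux (ω c : ℝ) :
    (starRingEnd ℂ) (A * Complex.exp (Complex.I * ω * c))
      = (starRingEnd ℂ) A * Complex.exp (-(Complex.I * ω * c)) := by
  rw [map_mul, ← Complex.exp_conj]
  congr 2
  simp [map_mul, Complex.conj_ofReal]

lemma rpow_half_sq (y : ℝ) (hy : 0 < y) :
    (y ^ (-(1/2) : ℝ)) ^ 2 = y⁻¹ := by
  rw [sq, ← Real.rpow_add hy, show (-(1/2) + -(1/2) : ℝ) = -1 by norm_num,
    Real.rpow_neg_one]

lemma norm_fpw_one_sq (A : ℂ) (ω x : ℝ) :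
    ‖fpw A ω 1 x‖ ^ 2
      = (xi (x + 1/2))⁻¹ * (4 * (A * Complex.exp (Complex.I * ω * chi x)).im ^ 2) := by
  have hxp := xi_pos (x + 1/2)
  set z := A * Complex.exp (Complex.I * ω * chi x) with hz
  have hc : fpw A ω 1 x
      = ((xi (x + 1/2) ^ (-(1/2) : ℝ) : ℝ) : ℂ) * (z - (starRingEnd ℂ) z) := by
    rw [fpw, conj_exp_aux]
    push_cast
    ring
  rw [hc, Complex.sub_conj]
  rw [norm_mul, norm_mul, Complex.norm_real, Complex.norm_real, Complex.norm_I,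
    Real.norm_eq_abs, Real.norm_eq_abs, abs_of_nonneg (Real.rpow_nonneg hxp.le _)]
  rw [mul_pow, mul_pow, rpow_half_sq _ hxp, sq_abs, one_pow]
  ring

lemma norm_fpw_neg_one_sq (A : ℂ) (ω x : ℝ) :
    ‖fpw A ω (-1) x‖ ^ 2
      = (xi (x + 1/2))⁻¹ * (4 * (A * Complex.exp (Complex.I * ω * chi x)).re ^ 2) := by
  have hxp := xi_pos (x + 1/2)
  set z := A * Complex.exp (Complex.I * ω * chi x) with hz
  have hc : fpw A ω (-1) x
      = ((xi (x + 1/2) ^ (-(1/2) : ℝ) : ℝ) : ℂ) * (z + (starRingEnd ℂ) z) := by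
    rw [fpw, conj_exp_aux]
    push_cast
    ring
  rw [hc, Complex.add_conj]
  rw [norm_mul, Complex.norm_real, Complex.norm_real,
    Real.norm_eq_abs, Real.norm_eq_abs, abs_of_nonneg (Real.rpow_nonneg hxp.le _)]
  rw [mul_pow, rpow_half_sq _ hxp, sq_abs]
  ring


lemma aux_two_sq (p q r : ℝ) (hp : 0 ≤ p) (hr : 0 ≤ r) (h : r ≤ p + q) :
    r ^ 2 ≤ 2 * p ^ 2 + 2 * q ^ 2 := by
  nlinarith [sq_nonneg (p - q), sq_nonneg (p + q - r)]

lemma aux_re_sq (u v a : ℝ) (h6 : (u - v) * (u + v) ≤ a / 4 * (2 * a)) :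
    u ^ 2 - a ^ 2 / 2 ≤ v ^ 2 := by nlinarith


set_option maxHeartbeats 1000000 in
/-- Non-normalizability of the generalized eigenfunctions: a solution φ of the
eigenvalue recurrence for ω with plane-wave asymptotics of amplitude A ≠ 0 satisfies
Σ_n |φ n|² = ∞, i.e. the sequence n ↦ |φ n|² is not summable. -/
theorem eigenfunction_not_normalizable (ω : ℝ) (A : ℂ) (hA : A ≠ 0) (φ : ℕ → ℂ)
    (hrec : SolvesRec ω φ) (hasymp : PlaneWaveAsymp A ω φ) :
    ¬ Summable (fun n : ℕ => ‖φ n‖ ^ 2) := by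
  obtain ⟨C, hC, Δ, hΔ, N₀, hbound⟩ := hasymp
  intro hS
  set a : ℝ := ‖A‖ with ha_def
  have ha : 0 < a := norm_pos_iff.mpr hA
  set N₁ : ℕ := max (N₀ + 1) (⌈8 * |ω|⌉₊ + 1) with hN₁
  have hkey : ∀ n : ℕ, N₁ ≤ n →
      a ^ 2 * ((n : ℝ) + 2)⁻¹
        ≤ ‖φ (2 * n)‖ ^ 2 + ‖φ (2 * n + 1)‖ ^ 2 + 2 * C ^ 2 * (n : ℝ) ^ (-(2 * Δ)) := by
    intro n hn
    have hn1 : 1 ≤ n := le_trans (le_trans (Nat.le_add_left 1 N₀) (le_max_left _ _)) hn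
    have hx1 : (1 : ℝ) ≤ (n : ℝ) := by exact_mod_cast hn1
    set x : ℝ := (n : ℝ) with hx_def
    have hx0 : (0 : ℝ) < x := by linarith
    have hxω : 8 * |ω| ≤ x := by
      have h1 : (⌈8 * |ω|⌉₊ + 1 : ℕ) ≤ n := le_trans (le_max_right _ _) hn
      have h2 : 8 * |ω| ≤ (⌈8 * |ω|⌉₊ : ℝ) := Nat.le_ceil _
      have h3 : ((⌈8 * |ω|⌉₊ : ℕ) : ℝ) ≤ x := by
        rw [hx_def]; exact_mod_cast le_trans (Nat.le_succ _) h1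
      linarith
    have h2n := hbound (2 * n) (by omega)
    have h2n1 := hbound (2 * n + 1) (by omega)
    have e1 : ((2 * n : ℕ) : ℝ) / 2 = x := by rw [hx_def]; push_cast; ring
    have e2 : ((2 * n + 1 : ℕ) : ℝ) / 2 = x + 1 / 2 := by rw [hx_def]; push_cast; ring
    have e3 : ((-1 : ℝ)) ^ (2 * n) = 1 := by rw [pow_mul]; norm_num
    have e4 : ((-1 : ℝ)) ^ (2 * n + 1) = -1 := by rw [pow_succ, e3]; norm_num
    rw [e1, e3] at h2n
    rw [e2, e4] at h2n1
    set z : ℂ := A * Complex.exp (Complex.I * ω * chi x) with hz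
    set z' : ℂ := A * Complex.exp (Complex.I * ω * chi (x + 1 / 2)) with hz'
    have habs_exp : ∀ c : ℝ, ‖Complex.exp (Complex.I * ω * c)‖ = 1 := by
      intro c
      rw [Complex.norm_exp]
      simp
    have habsz : ‖z‖ = a := by
      rw [hz, norm_mul, habs_exp, mul_one, ha_def]
    have habsz' : ‖z'‖ = a := by
      rw [hz', norm_mul, habs_exp, mul_one, ha_def]
    have hsq : z.re ^ 2 + z.im ^ 2 = a ^ 2 := by
      have h := Complex.sq_norm z
      rw [Complex.normSq_apply, habsz] at h
      rw [sq, sq]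
      linarith [h]
    obtain ⟨hd0, hd1⟩ := chi_mono_diff x hx1
    set d : ℝ := chi (x + 1 / 2) - chi x with hd
    have hz'_eq : z' = z + z * (Complex.exp (Complex.I * ω * d) - 1) := by
      rw [hz', hz]
      have e : Complex.I * ω * ((chi (x + 1/2) : ℝ) : ℂ)
          = Complex.I * ω * (chi x : ℝ) + Complex.I * ω * ((d : ℝ) : ℂ) := by
        rw [hd]; push_cast; ring
      rw [e, Complex.exp_add]
      ring
    have hωx : |ω| / x ≤ 1 / 8 := by
      rw [div_le_div_iff₀ hx0 (by norm_num)]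
      linarith
    have harg : ‖Complex.I * ω * d‖ ≤ |ω| / x := by
      rw [norm_mul, norm_mul, Complex.norm_I, one_mul, Complex.norm_real, Complex.norm_real,
        Real.norm_eq_abs, Real.norm_eq_abs, abs_of_nonneg hd0]
      have h1 : |ω| * d ≤ |ω| * (1 / x) := mul_le_mul_of_nonneg_left hd1 (abs_nonneg ω)
      have h2 : |ω| * (1 / x) = |ω| / x := by ring
      linarith
    have harg1 : ‖Complex.I * ω * d‖ ≤ 1 := by linarith
    have hzz' : ‖z' - z‖ ≤ a / 4 := by
      have h1 : ‖z' - z‖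
          = ‖z‖ * ‖Complex.exp (Complex.I * ω * d) - 1‖ := by
        rw [hz'_eq, show z + z * (Complex.exp (Complex.I * ω * ↑d) - 1) - z
            = z * (Complex.exp (Complex.I * ω * ↑d) - 1) by ring, norm_mul]
      have h2 : ‖Complex.exp (Complex.I * ω * d) - 1‖
          ≤ 2 * ‖Complex.I * ω * d‖ := Complex.norm_exp_sub_one_le harg1
      have h4 : ‖Complex.exp (Complex.I * ω * d) - 1‖ ≤ 1 / 4 := by linarith
      rw [h1, habsz]
      calc a * ‖Complex.exp (Complex.I * ω * d) - 1‖ ≤ a * (1 / 4) :=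
            mul_le_mul_of_nonneg_left h4 ha.le
        _ = a / 4 := by ring
    have hre' : z.re ^ 2 - a ^ 2 / 2 ≤ z'.re ^ 2 := by
      have h1 : |z.re - z'.re| ≤ a / 4 := by
        have h := Complex.abs_re_le_norm (z' - z)
        rw [Complex.sub_re] at h
        rw [abs_sub_comm]
        linarith [hzz']
      have h2 : |z.re| ≤ a := by rw [← habsz]; exact Complex.abs_re_le_norm z
      have h3 : |z'.re| ≤ a := by rw [← habsz']; exact Complex.abs_re_le_norm z'
      have h4 : |z.re + z'.re| ≤ 2 * a := le_trans (abs_add_le _ _) (by linarith)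
      have h5 : |(z.re - z'.re) * (z.re + z'.re)| ≤ (a / 4) * (2 * a) := by
        rw [abs_mul]
        exact mul_le_mul h1 h4 (abs_nonneg _) (by linarith)
      have h6 := (abs_le.mp h5).2
      exact aux_re_sq z.re z'.re a h6
    have hf1 : ‖fpw A ω 1 x‖ ^ 2 = (xi (x + 1/2))⁻¹ * (4 * z.im ^ 2) :=
      norm_fpw_one_sq A ω x
    have hf2 : ‖fpw A ω (-1) (x + 1/2)‖ ^ 2 = (xi (x + 1))⁻¹ * (4 * z'.re ^ 2) := by
      have h := norm_fpw_neg_one_sq A ω (x + 1/2)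
      rw [show x + 1/2 + 1/2 = x + 1 by ring] at h
      exact h
    have hxi1 : (x + 2)⁻¹ ≤ (xi (x + 1/2))⁻¹ := by
      apply inv_anti₀ (xi_pos _)
      have := xi_le (x + 1/2) (by linarith)
      linarith
    have hxi2 : (x + 2)⁻¹ ≤ (xi (x + 1))⁻¹ := by
      apply inv_anti₀ (xi_pos _)
      have := xi_le (x + 1) (by linarith)
      linarith
    have hinvpos : (0:ℝ) < (x + 2)⁻¹ := by positivity
    have hin : 2 * a ^ 2 ≤ 4 * z.im ^ 2 + 4 * z'.re ^ 2 := by linarith [hsq, hre']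
    have hcore : 2 * a ^ 2 * (x + 2)⁻¹
        ≤ ‖fpw A ω 1 x‖ ^ 2 + ‖fpw A ω (-1) (x + 1/2)‖ ^ 2 := by
      have c1 : (x + 2)⁻¹ * (4 * z.im ^ 2) ≤ (xi (x + 1/2))⁻¹ * (4 * z.im ^ 2) :=
        mul_le_mul_of_nonneg_right hxi1 (by positivity)
      have c2 : (x + 2)⁻¹ * (4 * z'.re ^ 2) ≤ (xi (x + 1))⁻¹ * (4 * z'.re ^ 2) :=
        mul_le_mul_of_nonneg_right hxi2 (by positivity)
      calc 2 * a ^ 2 * (x + 2)⁻¹ = (x + 2)⁻¹ * (2 * a ^ 2) := by ring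
        _ ≤ (x + 2)⁻¹ * (4 * z.im ^ 2 + 4 * z'.re ^ 2) :=
            mul_le_mul_of_nonneg_left hin hinvpos.le
        _ = (x + 2)⁻¹ * (4 * z.im ^ 2) + (x + 2)⁻¹ * (4 * z'.re ^ 2) := mul_add _ _ _
        _ ≤ ‖fpw A ω 1 x‖ ^ 2 + ‖fpw A ω (-1) (x + 1/2)‖ ^ 2 := by
            rw [hf1, hf2]; exact add_le_add c1 c2
    have hrpow_le : (x + 1/2) ^ (-Δ) ≤ x ^ (-Δ) :=
      Real.rpow_le_rpow_of_nonpos hx0 (by linarith) (by linarith)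
    have hrpow_pos : (0:ℝ) < x ^ (-Δ) := Real.rpow_pos_of_pos hx0 _
    have hrpow_sq : x ^ (-Δ) * x ^ (-Δ) = x ^ (-(2 * Δ)) := by
      rw [← Real.rpow_add hx0]; ring_nf
    have hb1 : ‖fpw A ω 1 x‖ ≤ ‖φ (2 * n)‖ + C * x ^ (-Δ) := by
      calc ‖fpw A ω 1 x‖ = ‖φ (2*n) - (φ (2*n) - fpw A ω 1 x)‖ := by ring_nf
        _ ≤ ‖φ (2*n)‖ + ‖φ (2*n) - fpw A ω 1 x‖ := norm_sub_le _ _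
        _ ≤ ‖φ (2*n)‖ + C * x ^ (-Δ) := by linarith [h2n]
    have hb2 : ‖fpw A ω (-1) (x + 1/2)‖ ≤ ‖φ (2 * n + 1)‖ + C * x ^ (-Δ) := by
      have h1 : C * (x + 1/2) ^ (-Δ) ≤ C * x ^ (-Δ) :=
        mul_le_mul_of_nonneg_left hrpow_le hC.le
      calc ‖fpw A ω (-1) (x + 1/2)‖
          = ‖φ (2*n+1) - (φ (2*n+1) - fpw A ω (-1) (x + 1/2))‖ := by ring_nf
        _ ≤ ‖φ (2*n+1)‖ + ‖φ (2*n+1) - fpw A ω (-1) (x + 1/2)‖ := norm_sub_le _ _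
        _ ≤ ‖φ (2*n+1)‖ + C * x ^ (-Δ) := by linarith [h2n1]
    have hrpow_sq2 : (x ^ (-Δ)) ^ 2 = x ^ (-(2 * Δ)) := by rw [sq]; exact hrpow_sq
    have hq2 : (C * x ^ (-Δ)) ^ 2 = C ^ 2 * x ^ (-(2 * Δ)) := by
      rw [mul_pow, hrpow_sq2]
    have hs1 : ‖fpw A ω 1 x‖ ^ 2 ≤ 2 * ‖φ (2 * n)‖ ^ 2 + 2 * (C ^ 2 * x ^ (-(2 * Δ))) := by
      have := aux_two_sq (‖φ (2 * n)‖) (C * x ^ (-Δ)) (‖fpw A ω 1 x‖)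
        (norm_nonneg _) (norm_nonneg _) hb1
      rw [hq2] at this
      linarith
    have hs2 : ‖fpw A ω (-1) (x + 1/2)‖ ^ 2
        ≤ 2 * ‖φ (2 * n + 1)‖ ^ 2 + 2 * (C ^ 2 * x ^ (-(2 * Δ))) := by
      have := aux_two_sq (‖φ (2 * n + 1)‖) (C * x ^ (-Δ)) (‖fpw A ω (-1) (x + 1/2)‖)
        (norm_nonneg _) (norm_nonneg _) hb2
      rw [hq2] at this
      linarith
    linarith [hcore, hs1, hs2]
  have hEven : Summable (fun n : ℕ => ‖φ (2 * n)‖ ^ 2) :=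
    hS.comp_injective (fun p q h => by omega)
  have hOdd : Summable (fun n : ℕ => ‖φ (2 * n + 1)‖ ^ 2) :=
    hS.comp_injective (fun p q h => by omega)
  have hPow : Summable (fun n : ℕ => (n : ℝ) ^ (-(2 * Δ))) :=
    Real.summable_nat_rpow.mpr (by linarith)
  have hRHS : Summable (fun n : ℕ =>
      ‖φ (2 * n)‖ ^ 2 + ‖φ (2 * n + 1)‖ ^ 2 + 2 * C ^ 2 * (n : ℝ) ^ (-(2 * Δ))) :=
    (hEven.add hOdd).add (hPow.mul_left _)
  have hshift : Summable (fun k : ℕ =>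
      ‖φ (2 * (k + N₁))‖ ^ 2 + ‖φ (2 * (k + N₁) + 1)‖ ^ 2
        + 2 * C ^ 2 * ((k + N₁ : ℕ) : ℝ) ^ (-(2 * Δ))) :=
    (summable_nat_add_iff N₁).mpr hRHS
  have hcmp : Summable (fun k : ℕ => a ^ 2 * (((k + N₁ : ℕ) : ℝ) + 2)⁻¹) := by
    apply Summable.of_nonneg_of_le (fun k => by positivity) _ hshift
    intro k
    exact hkey (k + N₁) (Nat.le_add_left _ _)
  have hcmp2 : Summable (fun k : ℕ => a ^ 2 * ((k + (N₁ + 2) : ℕ) : ℝ)⁻¹) := by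
    have e : (fun k : ℕ => a ^ 2 * ((k + (N₁ + 2) : ℕ) : ℝ)⁻¹)
        = (fun k : ℕ => a ^ 2 * (((k + N₁ : ℕ) : ℝ) + 2)⁻¹) := by
      funext k; push_cast; ring_nf
    rw [e]; exact hcmp
  have hcmp3 : Summable (fun k : ℕ => a ^ 2 * ((k : ℕ) : ℝ)⁻¹) :=
    (summable_nat_add_iff (N₁ + 2)).mp hcmp2
  have hfin : Summable (fun k : ℕ => ((k : ℕ) : ℝ)⁻¹) :=
    (summable_mul_left_iff (by positivity : a ^ 2 ≠ 0)).mp hcmp3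
  exact Real.not_summable_natCast_inv hfin
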